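/- Let S = P_S ∪ L_S be a resolving set for an affine plane of order q. If |S| ≤ 3q − 4, then |L_S| ≥ 2q − 3. -/

import Mathlib

open Set

/-- The bipartite point-line incidence graph of an incidence relation `I`. -/
def IncGraph {Pt Ln : Type*} (I : Pt → Ln → Prop) : SimpleGraph (Pt ⊕ Ln) where
  Adj x y := (∃ p l, x = Sum.inl p ∧ y = Sum.inr l ∧ I p l) ∨
             (∃ p l, x = Sum.inr l ∧ y = Sum.inl p ∧ I p l)
  symm := by
    refine ⟨?_⟩
    rintro x y (⟨p, l, hx, hy, h⟩ | ⟨p, l, hx, hy, h⟩)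
    · exact Or.inr ⟨p, l, hy, hx, h⟩
    · exact Or.inl ⟨p, l, hy, hx, h⟩
  loopless := by
    refine ⟨?_⟩
    rintro x (⟨p, l, hx, hy, h⟩ | ⟨p, l, hx, hy, h⟩) <;> subst hx <;> simp_all

/-- A set of vertices is a resolving set if every vertex is determined
by its distances to the elements of `S`. -/
def IsResolvingSet {V : Type*} (G : SimpleGraph V) (S : Set V) : Prop :=
  ∀ x y : V, (∀ s ∈ S, G.dist x s = G.dist y s) → x = y

/-- An affine plane of order `q`: `q²` points, `q² + q` lines, `q` points on each line,
`q + 1` lines through each point, and any two distinct points lie on a unique line. -/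
def IsAffinePlane {Pt Ln : Type*} (q : ℕ) (I : Pt → Ln → Prop) : Prop :=
  Nat.card Pt = q ^ 2 ∧ Nat.card Ln = q ^ 2 + q ∧
  (∀ l, {p | I p l}.ncard = q) ∧
  (∀ p, {l | I p l}.ncard = q + 1) ∧
  (∀ p₁ p₂ : Pt, p₁ ≠ p₂ → ∃! l, I p₁ l ∧ I p₂ l)

namespace IncAux

variable {Pt Ln : Type*} {I : Pt → Ln → Prop}

lemma adj_of_inc {p : Pt} {l : Ln} (h : I p l) :
    (IncGraph I).Adj (Sum.inl p) (Sum.inr l) := Or.inl ⟨p, l, rfl, rfl, h⟩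

lemma inc_of_adj {p : Pt} {l : Ln} (h : (IncGraph I).Adj (Sum.inl p) (Sum.inr l)) : I p l := by
  rcases h with ⟨p', l', hx, hy, h⟩ | ⟨p', l', hx, hy, h⟩
  · simp only [Sum.inl.injEq, Sum.inr.injEq] at hx hy; subst hx; subst hy; exact h
  · simp at hx

lemma not_adj_inl_inl (x y : Pt) : ¬ (IncGraph I).Adj (Sum.inl x) (Sum.inl y) := by
  rintro (⟨p, l, hx, hy, h⟩ | ⟨p, l, hx, hy, h⟩) <;> simp_all

lemma adj_flip {u v : Pt ⊕ Ln} (h : (IncGraph I).Adj u v) : u.isLeft = !v.isLeft := by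
  rcases h with ⟨p, l, hx, hy, _⟩ | ⟨p, l, hx, hy, _⟩ <;> subst hx <;> subst hy <;> rfl

lemma walk_parity {u v : Pt ⊕ Ln} (w : (IncGraph I).Walk u v) :
    (u.isLeft = v.isLeft) ↔ Even w.length := by
  induction w with
  | nil => simp
  | @cons a b c h w ih =>
    rw [SimpleGraph.Walk.length_cons, Nat.even_add_one, ← ih, adj_flip h]
    cases b.isLeft <;> cases c.isLeft <;> simp

/-- distance between two distinct collinear points is 2 -/
lemma dist_pp {x y : Pt} (hne : x ≠ y) {m : Ln} (hxm : I x m) (hym : I y m) :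
    (IncGraph I).dist (Sum.inl x) (Sum.inl y) = 2 := by
  let w : (IncGraph I).Walk (Sum.inl x) (Sum.inl y) :=
    .cons (adj_of_inc hxm) (.cons ((adj_of_inc hym).symm) .nil)
  have h2 : (IncGraph I).dist (Sum.inl x) (Sum.inl y) ≤ 2 := by
    simpa [w] using (IncGraph I).dist_le w
  have hpos : 0 < (IncGraph I).dist (Sum.inl x) (Sum.inl y) :=
    w.reachable.pos_dist_of_ne (by simpa using hne)
  have h1 : (IncGraph I).dist (Sum.inl x) (Sum.inl y) ≠ 1 := by
    intro h; rw [SimpleGraph.dist_eq_one_iff_adj] at h; exact not_adj_inl_inl x y h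
  omega

lemma dist_pl_one {x : Pt} {l : Ln} (h : I x l) :
    (IncGraph I).dist (Sum.inl x) (Sum.inr l) = 1 :=
  SimpleGraph.dist_eq_one_iff_adj.mpr (adj_of_inc h)

lemma dist_pl_three {x : Pt} {l : Ln} (hxl : ¬ I x l) {p : Pt} (hpl : I p l)
    {m : Ln} (hxm : I x m) (hpm : I p m) :
    (IncGraph I).dist (Sum.inl x) (Sum.inr l) = 3 := by
  let w : (IncGraph I).Walk (Sum.inl x) (Sum.inr l) :=
    .cons (adj_of_inc hxm) (.cons ((adj_of_inc hpm).symm)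
      (.cons (adj_of_inc hpl) .nil))
  have h3 : (IncGraph I).dist (Sum.inl x) (Sum.inr l) ≤ 3 := by
    simpa [w] using (IncGraph I).dist_le w
  obtain ⟨w', hw'⟩ := w.reachable.exists_walk_length_eq_dist
  have hodd : ¬ Even ((IncGraph I).dist (Sum.inl x) (Sum.inr l)) := by
    rw [← hw', ← walk_parity w']; simp
  have h1 : (IncGraph I).dist (Sum.inl x) (Sum.inr l) ≠ 1 := by
    intro h; rw [SimpleGraph.dist_eq_one_iff_adj] at h; exact hxl (inc_of_adj h)
  rcases Nat.even_or_odd ((IncGraph I).dist (Sum.inl x) (Sum.inr l)) with h | h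
  · exact absurd h hodd
  · obtain ⟨k, hk⟩ := h; omega

end IncAux

/-- If `S = P_S ∪ L_S` is a resolving set for an affine plane of order `q` and
`|S| ≤ 3q - 4`, then `|L_S| ≥ 2q - 3`. -/
theorem affine_resolving_many_lines {Pt Ln : Type*} [Fintype Pt] [Fintype Ln]
    (q : ℕ) (I : Pt → Ln → Prop) (hAP : IsAffinePlane q I)
    (PS : Set Pt) (LS : Set Ln)
    (hres : IsResolvingSet (IncGraph I) (Sum.inl '' PS ∪ Sum.inr '' LS))
    (hsize : (PS.ncard : ℤ) + LS.ncard ≤ 3 * q - 4) :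
    (LS.ncard : ℤ) ≥ 2 * q - 3 := by
  classical
  obtain ⟨hPt, hLn, hlq, hpq, huniq⟩ := hAP
  rcases le_or_gt q 1 with hq | hq
  · have h0 : (0:ℤ) ≤ (LS.ncard : ℤ) := Int.ofNat_nonneg _
    omega
  -- q ≥ 2 from here on
  have hjoin : ∀ x y : Pt, x ≠ y → ∃ m, I x m ∧ I y m := fun x y h => (huniq x y h).exists
  have hnonem : ∀ l : Ln, ∃ p, I p l := by
    intro l
    have h := hlq l
    have hne : {p | I p l}.Nonempty := by
      rw [← Set.ncard_pos (Set.toFinite _), h]; omega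
    exact hne
  have hd3 : ∀ (x : Pt) (l : Ln), ¬ I x l → (IncGraph I).dist (Sum.inl x) (Sum.inr l) = 3 := by
    intro x l hxl
    obtain ⟨p, hpl⟩ := hnonem l
    have hne : x ≠ p := fun h => hxl (h ▸ hpl)
    obtain ⟨m, hxm, hpm⟩ := hjoin x p hne
    exact IncAux.dist_pl_three hxl hpl hxm hpm
  have hd2 : ∀ x y : Pt, x ≠ y → (IncGraph I).dist (Sum.inl x) (Sum.inl y) = 2 := by
    intro x y hne
    obtain ⟨m, hxm, hym⟩ := hjoin x y hne
    exact IncAux.dist_pp hne hxm hym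
  -- Claim A
  have claimA : ∀ x y : Pt, x ∉ PS → y ∉ PS →
      (∀ l ∈ LS, ¬ I x l) → (∀ l ∈ LS, ¬ I y l) → x = y := by
    intro x y hx hy hxL hyL
    refine Sum.inl.inj (hres (Sum.inl x) (Sum.inl y) ?_)
    rintro s (⟨p, hp, rfl⟩ | ⟨l, hl, rfl⟩)
    · rw [hd2 x p (fun h => hx (h ▸ hp)), hd2 y p (fun h => hy (h ▸ hp))]
    · rw [hd3 x l (hxL l hl), hd3 y l (hyL l hl)]
  -- Claim B
  have claimB : ∀ x y : Pt, ∀ m ∈ LS, x ∉ PS → y ∉ PS → I x m → I y m →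
      (∀ l ∈ LS, l ≠ m → ¬ I x l) → (∀ l ∈ LS, l ≠ m → ¬ I y l) → x = y := by
    intro x y m hm hx hy hxm hym hxL hyL
    refine Sum.inl.inj (hres (Sum.inl x) (Sum.inl y) ?_)
    rintro s (⟨p, hp, rfl⟩ | ⟨l, hl, rfl⟩)
    · rw [hd2 x p (fun h => hx (h ▸ hp)), hd2 y p (fun h => hy (h ▸ hp))]
    · by_cases hlm : l = m
      · subst hlm
        rw [IncAux.dist_pl_one hxm, IncAux.dist_pl_one hym]
      · rw [hd3 x l (hxL l hl hlm), hd3 y l (hyL l hl hlm)]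
  -- counting setup
  have hLfin : LS.Finite := Set.toFinite _
  have hOfin : (PSᶜ : Set Pt).Finite := Set.toFinite _
  set Lf : Finset Ln := hLfin.toFinset with hLfdef
  set Of : Finset Pt := hOfin.toFinset with hOfdef
  set cov : Pt → ℕ := fun x => (Lf.filter (fun l => I x l)).card with hcovdef
  have memLf : ∀ l, l ∈ Lf ↔ l ∈ LS := fun l => hLfin.mem_toFinset
  have memOf : ∀ p, p ∈ Of ↔ p ∉ PS := fun p => by
    rw [hOfdef, Set.Finite.mem_toFinset]; rfl
  have cov0 : ∀ x, cov x = 0 → ∀ l ∈ LS, ¬ I x l := by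
    intro x h l hl hxl
    have hmem : l ∈ Lf.filter (fun l => I x l) := Finset.mem_filter.mpr ⟨(memLf l).mpr hl, hxl⟩
    rw [hcovdef] at h
    simp only [Finset.card_eq_zero] at h
    rw [h] at hmem
    exact absurd hmem (Finset.notMem_empty l)
  have cov1 : ∀ x m, cov x = 1 → m ∈ LS → I x m → ∀ l ∈ LS, l ≠ m → ¬ I x l := by
    intro x m h hm hxm l hl hlm hxl
    have h1 : ∀ a ∈ Lf.filter (fun l => I x l), ∀ b ∈ Lf.filter (fun l => I x l), a = b :=
      Finset.card_le_one.mp (le_of_eq h)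
    exact hlm (h1 l (Finset.mem_filter.mpr ⟨(memLf l).mpr hl, hxl⟩)
      m (Finset.mem_filter.mpr ⟨(memLf m).mpr hm, hxm⟩))
  set Af : Finset Pt := Of.filter (fun x => cov x = 0) with hAfdef
  set Bf : Finset Pt := Of.filter (fun x => cov x = 1) with hBfdef
  set Cf : Finset Pt := Of.filter (fun x => 2 ≤ cov x) with hCfdef
  have hAcard : Af.card ≤ 1 := by
    rw [Finset.card_le_one]
    intro a ha b hb
    obtain ⟨haO, ha0⟩ := Finset.mem_filter.mp ha
    obtain ⟨hbO, hb0⟩ := Finset.mem_filter.mp hb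
    exact claimA a b ((memOf a).mp haO) ((memOf b).mp hbO) (cov0 a ha0) (cov0 b hb0)
  have hBcard : Bf.card ≤ Lf.card := by
    have hsub : Bf ⊆ Lf.biUnion (fun l => Of.filter (fun x => cov x = 1 ∧ I x l)) := by
      intro x hx
      obtain ⟨hxO, hx1⟩ := Finset.mem_filter.mp hx
      obtain ⟨a, ha⟩ := Finset.card_eq_one.mp hx1
      have haf : a ∈ Lf.filter (fun l => I x l) := by
        rw [ha]; exact Finset.mem_singleton_self a
      obtain ⟨haL, hax⟩ := Finset.mem_filter.mp haf
      exact Finset.mem_biUnion.mpr ⟨a, haL, Finset.mem_filter.mpr ⟨hxO, hx1, hax⟩⟩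
    calc Bf.card ≤ (Lf.biUnion (fun l => Of.filter (fun x => cov x = 1 ∧ I x l))).card :=
          Finset.card_le_card hsub
      _ ≤ ∑ l ∈ Lf, (Of.filter (fun x => cov x = 1 ∧ I x l)).card :=
          Finset.card_biUnion_le
      _ ≤ ∑ l ∈ Lf, 1 := by
          refine Finset.sum_le_sum (fun l hl => ?_)
          rw [Finset.card_le_one]
          intro a ha b hb
          obtain ⟨haO, ha1, haI⟩ := Finset.mem_filter.mp ha
          obtain ⟨hbO, hb1, hbI⟩ := Finset.mem_filter.mp hb
          exact claimB a b l ((memLf l).mp hl) ((memOf a).mp haO) ((memOf b).mp hbO)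
            haI hbI (cov1 a l ha1 ((memLf l).mp hl) haI) (cov1 b l hb1 ((memLf l).mp hl) hbI)
      _ = Lf.card := by simp
  -- Of is covered by the three parts
  have hOsub : Of ⊆ Af ∪ Bf ∪ Cf := by
    intro x hx
    rcases Nat.lt_or_ge (cov x) 2 with h | h
    · interval_cases h' : cov x
      · exact Finset.mem_union_left _ (Finset.mem_union_left _
          (Finset.mem_filter.mpr ⟨hx, h'⟩))
      · exact Finset.mem_union_left _ (Finset.mem_union_right _
          (Finset.mem_filter.mpr ⟨hx, h'⟩))
    · exact Finset.mem_union_right _ (Finset.mem_filter.mpr ⟨hx, h⟩)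
  have hOcard : Of.card ≤ Af.card + Bf.card + Cf.card :=
    le_trans (Finset.card_le_card hOsub)
      (le_trans (Finset.card_union_le _ _)
        (add_le_add_left (Finset.card_union_le _ _) _))
  -- lower bound on total coverage
  have hBCdisj : Disjoint Bf Cf := by
    rw [Finset.disjoint_left]
    intro x hx hx'
    have h1 := (Finset.mem_filter.mp hx).2
    have h2 := (Finset.mem_filter.mp hx').2
    omega
  have hsumB : ∑ x ∈ Bf, cov x = Bf.card := by
    rw [Finset.sum_congr rfl (fun x hx => (Finset.mem_filter.mp hx).2)]
    simp; rfl
  have hsumC : 2 * Cf.card ≤ ∑ x ∈ Cf, cov x := by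
    have h := Finset.card_nsmul_le_sum Cf cov 2 (fun x hx => (Finset.mem_filter.mp hx).2)
    simpa [mul_comm] using h
  have hlow : Bf.card + 2 * Cf.card ≤ ∑ x ∈ Of, cov x := by
    calc Bf.card + 2 * Cf.card ≤ ∑ x ∈ Bf, cov x + ∑ x ∈ Cf, cov x := by
          rw [hsumB]; exact add_le_add_right hsumC _
      _ = ∑ x ∈ Bf ∪ Cf, cov x := (Finset.sum_union hBCdisj).symm
      _ ≤ ∑ x ∈ Of, cov x := Finset.sum_le_sum_of_subset (by
          intro x hx
          rcases Finset.mem_union.mp hx with h | h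
          · exact (Finset.mem_filter.mp h).1
          · exact (Finset.mem_filter.mp h).1)
  -- upper bound on total coverage
  have hswap : ∑ x ∈ Of, cov x = ∑ l ∈ Lf, (Of.filter (fun x => I x l)).card := by
    simp only [hcovdef, Finset.card_filter]
    rw [Finset.sum_comm]
  have hperline : ∀ l : Ln, (Of.filter (fun x => I x l)).card ≤ q := by
    intro l
    have hsub : Of.filter (fun x => I x l) ⊆ (Set.toFinite {p | I p l}).toFinset := by
      intro x hx
      rw [Set.Finite.mem_toFinset]
      exact (Finset.mem_filter.mp hx).2
    calc (Of.filter (fun x => I x l)).card ≤ ((Set.toFinite {p | I p l}).toFinset).card :=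
          Finset.card_le_card hsub
      _ = {p | I p l}.ncard := (Set.ncard_eq_toFinset_card _ _).symm
      _ = q := hlq l
  have hup : ∑ x ∈ Of, cov x ≤ Lf.card * q := by
    rw [hswap]
    calc ∑ l ∈ Lf, (Of.filter (fun x => I x l)).card ≤ ∑ l ∈ Lf, q :=
          Finset.sum_le_sum (fun l _ => hperline l)
      _ = Lf.card * q := by rw [Finset.sum_const, smul_eq_mul]
  -- cardinalities
  have hLcard : Lf.card = LS.ncard := (Set.ncard_eq_toFinset_card _ hLfin).symm
  have hOcard' : PS.ncard + Of.card = q ^ 2 := by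
    have h := Set.ncard_add_ncard_compl PS (Set.toFinite _) (Set.toFinite _)
    rw [hPt] at h
    rw [← h, hOfdef]
    congr 1
    exact (Set.ncard_eq_toFinset_card _ hOfin).symm
  -- final arithmetic
  by_contra hcon
  push_neg at hcon
  have hL' : (LS.ncard : ℤ) ≤ 2 * q - 4 := by omega
  have h1 : (Bf.card : ℤ) + 2 * Cf.card ≤ (LS.ncard : ℤ) * q := by
    have := le_trans hlow hup
    rw [hLcard] at this
    exact_mod_cast this
  have h2 : (Of.card : ℤ) ≤ Af.card + Bf.card + Cf.card := by exact_mod_cast hOcard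
  have h3 : (Bf.card : ℤ) ≤ LS.ncard := by rw [← hLcard]; exact_mod_cast hBcard
  have h4 : (PS.ncard : ℤ) + Of.card = (q:ℤ) ^ 2 := by exact_mod_cast hOcard'
  have hA : (Af.card : ℤ) ≤ 1 := by exact_mod_cast hAcard
  have hq2 : (2:ℤ) ≤ q := by exact_mod_cast hq
  have key : (LS.ncard : ℤ) * (q - 1) ≤ (2 * q - 4) * (q - 1) :=
    mul_le_mul_of_nonneg_right hL' (by linarith)
  nlinarith [h1, h2, h3, h4, hA, hsize, key, hq2]
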